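/- For every integer n, the identity (1/2)·(u - 2)·(u + 2)²·H_n = (n-1)·f_{2n+1} + f_{2n} - (n+1)·f_{2n-1} - n·u + 2n holds in ℚ[u], where H_n = g_{n+1}''·g_n - g_{n+1}·g_n''. -/

import Mathlib

open Polynomial

set_option linter.unusedSectionVars false in
lemma auxInd (M : ℤ → Prop) (h0 : M 0) (hup : ∀ j : ℤ, M j → M (j+1))
    (hdown : ∀ j : ℤ, M j → M (j-1)) : ∀ j : ℤ, M j := by
  intro j
  induction j using Int.induction_on with
  | zero => exact h0
  | succ k ih => exact hup _ ih
  | pred k ih => exact hdown _ ih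

section
set_option linter.unusedSectionVars false

variable (f : ℤ → Polynomial ℚ) (hf0 : f 0 = 0) (hf1 : f 1 = 1)
  (hrec : ∀ j : ℤ, f (j + 1) = X * f j - f (j - 1))
  (g : ℤ → Polynomial ℚ) (hg : ∀ j : ℤ, g j = f j - f (j - 1))
  (H : ℤ → Polynomial ℚ)
  (hH : ∀ m : ℤ, H m = derivative (derivative (g (m + 1))) * g m
      - g (m + 1) * derivative (derivative (g m)))

include hf0 hf1 hrec

lemma fm1 : f (-1) = -1 := by
  have h := hrec 0
  norm_num at h
  rw [hf0, hf1] at h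
  linear_combination h

lemma f2 : f 2 = X := by
  have h := hrec 1
  norm_num at h
  rw [hf0, hf1] at h
  rw [h]; ring

lemma fm2 : f (-2) = -X := by
  have h := hrec (-1)
  norm_num at h
  rw [hf0, fm1 f hf0 hf1 hrec] at h
  linear_combination h

lemma fdrec : ∀ j : ℤ, derivative (f (j+1)) = f j + X * derivative (f j) - derivative (f (j-1)) := by
  intro j
  rw [hrec j]
  simp only [derivative_sub, derivative_mul, derivative_X, one_mul]

lemma lemA : ∀ m : ℤ, (X^2 - 4) * derivative (f m)
    = C ((m:ℚ)) * (f (m+1) - f (m-1)) - X * f m := by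
  have key : ∀ m : ℤ,
      ((X^2 - 4) * derivative (f m) = C ((m:ℚ)) * (f (m+1) - f (m-1)) - X * f m) ∧
      ((X^2 - 4) * derivative (f (m+1)) = C (((m+1 : ℤ):ℚ)) * (f (m+1+1) - f (m+1-1)) - X * f (m+1)) := by
    apply auxInd
    · constructor
      · norm_num [hf0, fm1 f hf0 hf1 hrec]
      · norm_num [hf0, hf1, f2 f hf0 hf1 hrec]
    · rintro j ⟨h1, h2⟩
      refine ⟨h2, ?_⟩
      have hr0 : f (j-1) = X * f j - f (j+1) := by linear_combination hrec j
      have hr1 : f (j+2) = X * f (j+1) - f j := by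
        have t := hrec (j+1); rwa [show j+1+1 = j+2 by ring, show j+1-1 = j by ring] at t
      have hr2 : f (j+3) = X * f (j+2) - f (j+1) := by
        have t := hrec (j+2); rwa [show j+2+1 = j+3 by ring, show j+2-1 = j+1 by ring] at t
      have hd2 : derivative (f (j+2)) = f (j+1) + X * derivative (f (j+1)) - derivative (f j) := by
        have t := fdrec f hf0 hf1 hrec (j+1)
        rwa [show j+1+1 = j+2 by ring, show j+1-1 = j by ring] at t
      rw [show j+1+1+1 = j+3 by ring, show j+1+1-1 = j+1 by ring, show j+1+1 = j+2 by ring]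
      rw [hd2, hr2, hr1]
      rw [show j+1+1 = j+2 by ring, show j+1-1 = j by ring] at h2
      rw [hr1] at h2
      rw [hr0] at h1
      push_cast at h2 ⊢
      simp only [map_add, map_one, map_ofNat] at h2 ⊢
      linear_combination X * h2 - h1
    · rintro j ⟨h1, h2⟩
      have hm1 : f (j-1) = X * f j - f (j+1) := by linear_combination hrec j
      constructor
      · have hm2 : f (j-2) = X * f (j-1) - f j := by
          have t := hrec (j-1)
          rw [show j-1+1 = j by ring, show j-1-1 = j-2 by ring] at t
          linear_combination t
        have hdm : derivative (f (j-1)) = f j + X * derivative (f j) - derivative (f (j+1)) := by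
          linear_combination fdrec f hf0 hf1 hrec j
        rw [show j-1+1 = j by ring, show j-1-1 = j-2 by ring]
        rw [hdm, hm2, hm1]
        rw [show j+1+1 = j+2 by ring, show j+1-1 = j by ring] at h2
        have hr1 : f (j+2) = X * f (j+1) - f j := by
          have t := hrec (j+1); rwa [show j+1+1 = j+2 by ring, show j+1-1 = j by ring] at t
        rw [hr1] at h2
        rw [hm1] at h1
        push_cast at h2 ⊢
        simp only [map_sub, map_add, map_one, map_ofNat] at h2 ⊢
        linear_combination X * h1 - h2
      · rw [show j-1+1 = j by ring]
        exact h1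
  intro m; exact (key m).1

include hg

lemma g0 : g 0 = 1 := by
  rw [hg 0]; norm_num [hf0, fm1 f hf0 hf1 hrec]

lemma g1 : g 1 = 1 := by
  rw [hg 1]; norm_num [hf1, hf0]

lemma grec : ∀ j : ℤ, g (j+1) = X * g j - g (j-1) := by
  intro j
  have t2 := hrec (j-1)
  rw [show j-1+1 = j by ring, show j-1-1 = j-2 by ring] at t2
  rw [hg (j+1), hg j, hg (j-1), show j+1-1 = j by ring, show j-1-1 = j-2 by ring]
  linear_combination hrec j - t2

lemma gdrec : ∀ j : ℤ, derivative (g (j+1)) = g j + X * derivative (g j) - derivative (g (j-1)) := by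
  intro j
  rw [grec f hf0 hf1 hrec g hg j]
  simp only [derivative_sub, derivative_mul, derivative_X, one_mul]

lemma gdrec2 : ∀ j : ℤ, derivative (derivative (g (j+1)))
    = 2 * derivative (g j) + X * derivative (derivative (g j)) - derivative (derivative (g (j-1))) := by
  intro j
  rw [gdrec f hf0 hf1 hrec g hg j]
  simp only [derivative_add, derivative_sub, derivative_mul, derivative_X, one_mul]
  ring

lemma lemTS : ∀ m : ℤ,
    ((X+2) * (g m)^2 = f (2*m) - f (2*m-2) + 2) ∧
    ((X+2) * (g (m+1))^2 = f (2*(m+1)) - f (2*(m+1)-2) + 2) ∧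
    ((X+2) * (g (m+1) * g m) = f (2*m+1) - f (2*m-1) + X) := by
  have hgrec := grec f hf0 hf1 hrec g hg
  apply auxInd
  · refine ⟨?_, ?_, ?_⟩ <;>
      norm_num [g0 f hf0 hf1 hrec g hg, g1 f hf0 hf1 hrec g hg, hf0, hf1,
        f2 f hf0 hf1 hrec, fm1 f hf0 hf1 hrec, fm2 f hf0 hf1 hrec] <;> ring
  · rintro j ⟨hT0, hT1, hS⟩
    rw [show (2*(j+1)-2:ℤ) = 2*j by ring, show (2*(j+1):ℤ) = 2*j+2 by ring] at hT1
    have hgr2 : g (j+2) = X * g (j+1) - g j := by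
      have t := hgrec (j+1); rwa [show (j+1+1:ℤ) = j+2 by ring, show (j+1-1:ℤ) = j by ring] at t
    have r1 : f (2*j+2) = X * f (2*j+1) - f (2*j) := by
      have t := hrec (2*j+1); rwa [show (2*j+1+1:ℤ) = 2*j+2 by ring, show (2*j+1-1:ℤ) = 2*j by ring] at t
    have r2 : f (2*j+3) = X * f (2*j+2) - f (2*j+1) := by
      have t := hrec (2*j+2); rwa [show (2*j+2+1:ℤ) = 2*j+3 by ring, show (2*j+2-1:ℤ) = 2*j+1 by ring] at t
    have r3 : f (2*j+4) = X * f (2*j+3) - f (2*j+2) := by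
      have t := hrec (2*j+3); rwa [show (2*j+3+1:ℤ) = 2*j+4 by ring, show (2*j+3-1:ℤ) = 2*j+2 by ring] at t
    have rm : f (2*j-1) = X * f (2*j) - f (2*j+1) := by linear_combination hrec (2*j)
    have rmm : f (2*j-2) = X * f (2*j-1) - f (2*j) := by
      have t := hrec (2*j-1)
      rw [show (2*j-1+1:ℤ) = 2*j by ring, show (2*j-1-1:ℤ) = 2*j-2 by ring] at t
      linear_combination t
    rw [rmm, rm] at hT0
    rw [rm] at hS
    rw [r1] at hT1
    refine ⟨?_, ?_, ?_⟩
    · rw [show (2*(j+1)-2:ℤ) = 2*j by ring, show (2*(j+1):ℤ) = 2*j+2 by ring, r1]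
      linear_combination hT1
    · rw [show (2*(j+1+1)-2:ℤ) = 2*j+2 by ring, show (2*(j+1+1):ℤ) = 2*j+4 by ring,
        show (j+1+1:ℤ) = j+2 by ring]
      rw [hgr2, r3, r2, r1]
      linear_combination X^2 * hT1 - 2*X*hS + hT0
    · rw [show (2*(j+1)+1:ℤ) = 2*j+3 by ring, show (2*(j+1)-1:ℤ) = 2*j+1 by ring,
        show (j+1+1:ℤ) = j+2 by ring]
      rw [hgr2, r2, r1]
      linear_combination X * hT1 - hS
  · rintro j ⟨hT0, hT1, hS⟩
    rw [show (2*(j+1)-2:ℤ) = 2*j by ring, show (2*(j+1):ℤ) = 2*j+2 by ring] at hT1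
    have hgm : g (j-1) = X * g j - g (j+1) := by linear_combination hgrec j
    have r1 : f (2*j+2) = X * f (2*j+1) - f (2*j) := by
      have t := hrec (2*j+1); rwa [show (2*j+1+1:ℤ) = 2*j+2 by ring, show (2*j+1-1:ℤ) = 2*j by ring] at t
    have rm : f (2*j-1) = X * f (2*j) - f (2*j+1) := by linear_combination hrec (2*j)
    have rmm : f (2*j-2) = X * f (2*j-1) - f (2*j) := by
      have t := hrec (2*j-1)
      rw [show (2*j-1+1:ℤ) = 2*j by ring, show (2*j-1-1:ℤ) = 2*j-2 by ring] at t
      linear_combination t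
    have rm3 : f (2*j-3) = X * f (2*j-2) - f (2*j-1) := by
      have t := hrec (2*j-2)
      rw [show (2*j-2+1:ℤ) = 2*j-1 by ring, show (2*j-2-1:ℤ) = 2*j-3 by ring] at t
      linear_combination t
    have rm4 : f (2*j-4) = X * f (2*j-3) - f (2*j-2) := by
      have t := hrec (2*j-3)
      rw [show (2*j-3+1:ℤ) = 2*j-2 by ring, show (2*j-3-1:ℤ) = 2*j-4 by ring] at t
      linear_combination t
    rw [rmm, rm] at hT0
    rw [rm] at hS
    rw [r1] at hT1
    refine ⟨?_, ?_, ?_⟩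
    · rw [show (2*(j-1)-2:ℤ) = 2*j-4 by ring, show (2*(j-1):ℤ) = 2*j-2 by ring]
      rw [hgm, rm4, rm3, rmm, rm]
      linear_combination X^2 * hT0 - 2*X*hS + hT1
    · rw [show (2*(j-1+1)-2:ℤ) = 2*j-2 by ring, show (2*(j-1+1):ℤ) = 2*j by ring,
        show (j-1+1:ℤ) = j by ring]
      rw [rmm, rm]
      linear_combination hT0
    · rw [show (2*(j-1)+1:ℤ) = 2*j-1 by ring, show (2*(j-1)-1:ℤ) = 2*j-3 by ring,
        show (j-1+1:ℤ) = j by ring]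
      rw [hgm, rm3, rmm, rm]
      linear_combination X * hT0 - hS

lemma lemT : ∀ m : ℤ, (X+2) * (g m)^2 = f (2*m) - f (2*m-2) + 2 :=
  fun m => (lemTS f hf0 hf1 hrec g hg m).1

lemma lemdT : ∀ m : ℤ, (g m)^2 + (X+2) * (2 * (g m * derivative (g m)))
    = derivative (f (2*m)) - derivative (f (2*m-2)) := by
  intro m
  have t := congrArg derivative (lemT f hf0 hf1 hrec g hg m)
  norm_num [derivative_mul, derivative_add, derivative_sub, derivative_X, derivative_pow,
    derivative_ofNat, map_ofNat] at t
  linear_combination t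

include hH

lemma lemHstep : ∀ j : ℤ, H (j+1) = H j + 2 * (g (j+1) * derivative (g (j+1))) := by
  intro j
  have e1 : g (j+1+1) = X * g (j+1) - g j := by
    have t := grec f hf0 hf1 hrec g hg (j+1)
    rwa [show (j+1-1:ℤ) = j by ring] at t
  have e2 : derivative (derivative (g (j+1+1)))
      = 2 * derivative (g (j+1)) + X * derivative (derivative (g (j+1)))
        - derivative (derivative (g j)) := by
    have t := gdrec2 f hf0 hf1 hrec g hg (j+1)
    rwa [show (j+1-1:ℤ) = j by ring] at t
  rw [hH (j+1), hH j, e2, e1]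
  ring

lemma lemB : ∀ m : ℤ, (X+2)^2 * H m
    = (X+2) * derivative (f (2*m)) - f (2*m) - C (2*(m:ℚ)) := by
  apply auxInd
  · have h0 : H 0 = 0 := by
      rw [hH 0]
      norm_num [g0 f hf0 hf1 hrec g hg, g1 f hf0 hf1 hrec g hg]
    rw [h0]
    norm_num [hf0]
  · intro j hBj
    have hs := lemHstep f hf0 hf1 hrec g hg H hH j
    have t1 := lemT f hf0 hf1 hrec g hg (j+1)
    rw [show (2*(j+1)-2:ℤ) = 2*j by ring, show (2*(j+1):ℤ) = 2*j+2 by ring] at t1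
    have d1 := lemdT f hf0 hf1 hrec g hg (j+1)
    rw [show (2*(j+1)-2:ℤ) = 2*j by ring, show (2*(j+1):ℤ) = 2*j+2 by ring] at d1
    rw [show (2*(j+1):ℤ) = 2*j+2 by ring]
    push_cast
    simp only [map_mul, map_sub, map_add, map_one, map_ofNat] at hBj ⊢
    linear_combination (X+2)^2 * hs + hBj + (X+2) * d1 - t1
  · intro j hBj
    have hs := lemHstep f hf0 hf1 hrec g hg H hH (j-1)
    rw [show (j-1+1:ℤ) = j by ring] at hs
    have t1 := lemT f hf0 hf1 hrec g hg j
    have d1 := lemdT f hf0 hf1 hrec g hg j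
    rw [show (2*(j-1):ℤ) = 2*j-2 by ring]
    push_cast
    simp only [map_mul, map_sub, map_add, map_one, map_ofNat] at hBj ⊢
    linear_combination (-((X+2)^2)) * hs + hBj - (X+2) * d1 + t1

end

/-- in `ℚ[u]`,
`(1/2)(u-2)(u+2)² H n = (n-1) f (2n+1) + f (2n) - (n+1) f (2n-1) - n u + 2n`,
where `H n = g (n+1)'' · g n - g (n+1) · g n''`. -/
theorem stmt19 (f : ℤ → Polynomial ℚ)
    (hf0 : f 0 = 0) (hf1 : f 1 = 1)
    (hrec : ∀ j : ℤ, f (j + 1) = X * f j - f (j - 1))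
    (g : ℤ → Polynomial ℚ) (hg : ∀ j : ℤ, g j = f j - f (j - 1))
    (H : ℤ → Polynomial ℚ)
    (hH : ∀ m : ℤ, H m = derivative (derivative (g (m + 1))) * g m
        - g (m + 1) * derivative (derivative (g m)))
    (n : ℤ) :
    C (1 / 2 : ℚ) * (X - 2) * (X + 2) ^ 2 * H n
      = C ((n : ℚ) - 1) * f (2 * n + 1) + f (2 * n) - C ((n : ℚ) + 1) * f (2 * n - 1)
        - C (n : ℚ) * X + C (2 * (n : ℚ)) := by
  have hA' := lemA f hf0 hf1 hrec (2*n)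
  have hB' := lemB f hf0 hf1 hrec g hg H hH n
  have hr := hrec (2*n)
  have hC : C (1/2 : ℚ) * 2 = (1:ℚ[X]) := by
    rw [← map_ofNat C 2, ← map_mul]; norm_num
  have G2 : (X-2)*(X+2)^2 * H n
      = 2 * (C ((n : ℚ) - 1) * f (2 * n + 1) + f (2 * n) - C ((n : ℚ) + 1) * f (2 * n - 1)
        - C (n : ℚ) * X + C (2 * (n : ℚ))) := by
    push_cast at hA'
    simp only [map_mul, map_sub, map_add, map_one, map_ofNat] at hA' hB' ⊢
    linear_combination (X-2) * hB' + hA' + 2 * hr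
  rw [show C (1/2:ℚ) * (X-2) * (X+2)^2 * H n = C (1/2:ℚ) * ((X-2)*(X+2)^2 * H n) from by ring,
    G2, ← mul_assoc, hC, one_mul]
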